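/- There is an absolute constant C > 0 such that the following holds: let δ ∈ [0,1/2], let S : [0,1] → [0,1] satisfy |S(r) − r| ≤ δ·r(1−r) for all r ∈ [0,1], and let a ∈ C[0,1] be continuously differentiable on (0,1) with ‖a‖₁ := sup_{0<r<1} r(1−r)|a'(r)| < ∞. Then max_{0≤r≤1} |a(S(r)) − a(r)| ≤ C·‖a‖₁·δ. -/

import Mathlib

/- STATEMENT 8: There is an absolute constant C > 0 such that: for δ ∈ [0,1/2],
S : [0,1] → [0,1] with |S(r) − r| ≤ δ·r(1−r), and a ∈ C[0,1] continuously differentiable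
on (0,1) with ‖a‖₁ = sup r(1−r)|a'(r)| < ∞, one has
max_{0≤r≤1} |a(S(r)) − a(r)| ≤ C·‖a‖₁·δ. -/
theorem stmt_8 :
    ∃ C : ℝ, 0 < C ∧
      ∀ δ : ℝ, δ ∈ Set.Icc (0:ℝ) (1/2) →
      ∀ S : ℝ → ℝ,
        (∀ r ∈ Set.Icc (0:ℝ) 1, S r ∈ Set.Icc (0:ℝ) 1) →
        (∀ r ∈ Set.Icc (0:ℝ) 1, |S r - r| ≤ δ * (r * (1 - r))) →
      ∀ a a' : ℝ → ℝ,
        ContinuousOn a (Set.Icc 0 1) →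
        (∀ r ∈ Set.Ioo (0:ℝ) 1, HasDerivAt a (a' r) r) →
        ContinuousOn a' (Set.Ioo 0 1) →
      ∀ N : ℝ, (∀ r ∈ Set.Ioo (0:ℝ) 1, r * (1 - r) * |a' r| ≤ N) →
      ∀ r ∈ Set.Icc (0:ℝ) 1, |a (S r) - a r| ≤ C * N * δ := by
  refine ⟨4, by norm_num, ?_⟩
  intro δ hδ S hSmap hS a a' ha hderiv ha' N hN r hr
  have hδ0 : 0 ≤ δ := hδ.1
  have hδ2 : δ ≤ 1/2 := hδ.2
  have hN0 : 0 ≤ N := by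
    have h := hN (1/2) (by norm_num)
    nlinarith [abs_nonneg (a' (1/2))]
  rcases eq_or_lt_of_le hr.1 with h0 | h0
  · -- r = 0
    have hS0 : |S r - r| ≤ 0 := by
      have := hS r hr
      rw [← h0] at this ⊢
      simpa using this
    have : S r = r := sub_eq_zero.mp (abs_nonpos_iff.mp hS0)
    rw [this]
    simp
    positivity
  rcases eq_or_lt_of_le hr.2 with h1 | h1
  · -- r = 1
    have hS0 : |S r - r| ≤ 0 := by
      have := hS r hr
      rw [h1] at this ⊢
      simpa using this
    have : S r = r := sub_eq_zero.mp (abs_nonpos_iff.mp hS0)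
    rw [this]
    simp
    positivity
  -- interior case
  have hr0 : 0 < r := h0
  have hr1 : r < 1 := h1
  have hSb := hS r hr
  have habs := abs_le.mp hSb
  -- the segment between r and S r
  set m := min r (S r) with hm
  set M := max r (S r) with hM
  have h1' : r - δ * (r * (1 - r)) ≤ S r := by linarith [habs.1]
  have h2' : S r ≤ r + δ * (r * (1 - r)) := by linarith [habs.2]
  have hml : r - δ * (r * (1 - r)) ≤ m := le_min (by nlinarith) h1'
  have hMu : M ≤ r + δ * (r * (1 - r)) := max_le (by nlinarith) h2'
  have hml2 : r / 2 ≤ m := by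
    nlinarith [mul_nonneg (mul_nonneg (by linarith : (0:ℝ) ≤ 1/2 - δ) hr0.le) (by linarith : (0:ℝ) ≤ 1 - r),
      mul_nonneg (mul_nonneg hδ0 hr0.le) hr0.le]
  have hMu2 : M ≤ (1 + r) / 2 := by
    nlinarith [mul_nonneg (mul_nonneg (by linarith : (0:ℝ) ≤ 1/2 - δ) hr0.le) (by linarith : (0:ℝ) ≤ 1 - r),
      mul_nonneg (mul_nonneg hδ0 (by linarith : (0:ℝ) ≤ 1 - r)) (by linarith : (0:ℝ) ≤ 1 - r)]
  have hmM : m ≤ M := min_le_max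
  have hm0 : 0 < m := lt_of_lt_of_le (by linarith) hml2
  have hM1 : M < 1 := lt_of_le_of_lt hMu2 (by linarith)
  have hmpos : r * (1 - r) / 4 ≤ m * (1 - M) := by
    have := mul_le_mul hml2 (by linarith : (1 - r) / 2 ≤ 1 - M)
      (by linarith) hm0.le
    linarith
  have hsub : Set.Icc m M ⊆ Set.Ioo (0:ℝ) 1 := fun t ht =>
    ⟨lt_of_lt_of_le hm0 ht.1, lt_of_le_of_lt ht.2 hM1⟩
  -- derivative bound on [m, M]
  have hbound : ∀ t ∈ Set.Icc m M, ‖a' t‖ ≤ 4 * N / (r * (1 - r)) := by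
    intro t ht
    have ht' := hsub ht
    have hNt := hN t ht'
    have htl : m * (1 - M) ≤ t * (1 - t) := by
      have := mul_le_mul ht.1 (by linarith [ht.2] : 1 - M ≤ 1 - t)
        (by linarith) (le_of_lt (lt_of_lt_of_le hm0 ht.1))
      linarith
    have hrr : 0 < r * (1 - r) := mul_pos hr0 (by linarith)
    rw [Real.norm_eq_abs, le_div_iff₀ hrr]
    nlinarith [abs_nonneg (a' t),
      mul_le_mul_of_nonneg_left (le_trans hmpos htl) (abs_nonneg (a' t))]
  have hderivW : ∀ t ∈ Set.Icc m M, HasDerivWithinAt a (a' t) (Set.Icc m M) t := fun t ht =>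
    ((hderiv t (hsub ht)).hasDerivWithinAt)
  have key := (convex_Icc m M).norm_image_sub_le_of_norm_hasDerivWithin_le hderivW hbound
    (⟨min_le_left r (S r), le_max_left r (S r)⟩ : r ∈ Set.Icc m M)
    (⟨min_le_right r (S r), le_max_right r (S r)⟩ : S r ∈ Set.Icc m M)
  rw [Real.norm_eq_abs, Real.norm_eq_abs] at key
  have hrr : 0 < r * (1 - r) := mul_pos hr0 (by linarith)
  calc |a (S r) - a r| ≤ 4 * N / (r * (1 - r)) * |S r - r| := key
    _ ≤ 4 * N / (r * (1 - r)) * (δ * (r * (1 - r))) := by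
        apply mul_le_mul_of_nonneg_left hSb (by positivity)
    _ = 4 * N * δ := by field_simp
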